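/- The execution with two processes i and j, two memory locations x and y, where process i performs wr(x,1); rd(x):1; rd(y):0; rd(y):2 and process j performs wr(y,2); rd(y):2; rd(x):0; rd(x):1, with visibility making wr(x,1) visible to the last read of j and wr(y,2) visible to the last read of i (plus local visibility), admits no pair of serializations ser_i = ser_j (arbitration) that makes all read results valid under the sequential read/write register semantics while also satisfying serial consistency. Equivalently: this history satisfies serial consistency but no valid execution for it satisfies both serial consistency and arbitration. -/

import Mathlib

/-- Memory operations over two locations (`true` = x, `false` = y). -/
inductive MOp where
  | wr : Bool → ℕ → MOp
  | rd : Bool → MOp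
deriving DecidableEq

/-- Events: first component is the process (`true` = i, `false` = j),
second the position in its local history. -/
abbrev Ev13 := Bool × Fin 4

/-- The operations of the history:
i: wr(x,1); rd(x); rd(y); rd(y) and j: wr(y,2); rd(y); rd(x); rd(x). -/
def opOf : Ev13 → MOp
  | (true, k) =>
      if k.val = 0 then .wr true 1 else if k.val = 1 then .rd true else .rd false
  | (false, k) =>
      if k.val = 0 then .wr false 2 else if k.val = 1 then .rd false else .rd true

/-- The results of the history: writes return 0;
i's reads return 1, 0, 2 and j's reads return 2, 0, 1. -/
def resOf : Ev13 → ℕ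
  | (true, k) =>
      if k.val = 0 then 0 else if k.val = 1 then 1 else if k.val = 2 then 0 else 2
  | (false, k) =>
      if k.val = 0 then 0 else if k.val = 1 then 2 else if k.val = 2 then 0 else 1

/-- Program order: same process, earlier position. -/
def po13 (a b : Ev13) : Prop := a.1 = b.1 ∧ a.2 < b.2

/-- Mandatory visibility: program order (local visibility), plus wr(x,1)
visible to the last read of j and wr(y,2) visible to the last read of i. -/
def vis13 (a b : Ev13) : Prop :=
  po13 a b ∨ (a = (true, (0 : Fin 4)) ∧ b = (false, (3 : Fin 4)))
    ∨ (a = (false, (0 : Fin 4)) ∧ b = (true, (3 : Fin 4)))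

/-- Each serialization is a strict total order. -/
def STO13 (ser : Bool → Ev13 → Ev13 → Prop) : Prop :=
  (∀ p a, ¬ ser p a a) ∧ (∀ p a b c, ser p a b → ser p b c → ser p a c) ∧
  (∀ p a b, a ≠ b → ser p a b ∨ ser p b a)

/-- Sequential read/write register semantics: every read returns the value of
the last visible write to its location serialized before it, or 0 if there is
no visible write to that location. -/
def Valid13 (vis : Ev13 → Ev13 → Prop) (ser : Bool → Ev13 → Ev13 → Prop) : Prop :=
  ∀ (o : Ev13) (l : Bool), opOf o = .rd l →
    ((¬ ∃ w v, opOf w = MOp.wr l v ∧ vis w o) ∧ resOf o = 0) ∨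
    (∃ w, opOf w = MOp.wr l (resOf o) ∧ vis w o ∧
      ∀ w' v', opOf w' = MOp.wr l v' → vis w' o → w' ≠ w → ser o.1 w' w)

/-- Serial consistency: events serialized before an event are exactly those
visible to it. -/
def SerCons13 (vis : Ev13 → Ev13 → Prop) (ser : Bool → Ev13 → Ev13 → Prop) : Prop :=
  ∀ o x : Ev13, ser o.1 x o ↔ vis x o

instance : ∀ a b : Ev13, Decidable (po13 a b) := fun a b => by
  unfold po13; infer_instance

instance : ∀ a b : Ev13, Decidable (vis13 a b) := fun a b => by
  unfold vis13; infer_instance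

/-- Rank of an event in the serialization of process `p`. -/
def rk13 (p : Bool) (e : Ev13) : ℕ :=
  if e.1 = p then (if e.2.val ≤ 2 then e.2.val else 4)
  else (if e.2.val = 0 then 3 else e.2.val + 4)

/-- The witness serializations: order by rank. -/
def serW (p : Bool) (a b : Ev13) : Prop := rk13 p a < rk13 p b

instance : ∀ p (a b : Ev13), Decidable (serW p a b) := fun p a b => by
  unfold serW; infer_instance

lemma rk13_inj : ∀ p (a b : Ev13), a ≠ b → rk13 p a ≠ rk13 p b := by decide

lemma serCons_w : SerCons13 vis13 serW := by unfold SerCons13; decide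

lemma sto_w : STO13 serW := by
  refine ⟨fun p a => Nat.lt_irrefl _, fun p a b c => Nat.lt_trans, fun p a b h => ?_⟩
  rcases Nat.lt_or_ge (rk13 p a) (rk13 p b) with h' | h'
  · exact Or.inl h'
  · exact Or.inr (lt_of_le_of_ne h' (rk13_inj p b a (Ne.symm h)))

lemma no_wr0 : ∀ (w : Ev13) (l : Bool), opOf w ≠ MOp.wr l 0 := by decide

lemma wr_loc : ∀ (w : Ev13) (l : Bool) (v : ℕ), opOf w = MOp.wr l v → w = (l, (0 : Fin 4)) := by
  intro w l v hw
  rcases w with ⟨c, m⟩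
  fin_cases c <;> fin_cases m <;> fin_cases l <;> simp_all [opOf]

lemma valid_w : Valid13 vis13 serW := by
  intro o l h
  rcases o with ⟨b, k⟩
  fin_cases b <;> fin_cases k
  · simp [opOf] at h
  · right
    have hl : l = true := by simpa [opOf] using h.symm
    subst hl
    exact ⟨(true, 0), by decide, by decide,
      fun w' v' hw' _ hne => absurd (wr_loc w' true v' hw') hne⟩
  · left
    have hl : l = false := by simpa [opOf] using h.symm
    subst hl
    refine ⟨?_, by decide⟩
    rintro ⟨w, v, hw, hv⟩
    obtain rfl := wr_loc w false v hw
    exact absurd hv (by decide)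
  · right
    have hl : l = false := by simpa [opOf] using h.symm
    subst hl
    exact ⟨(false, 0), by decide, by decide,
      fun w' v' hw' _ hne => absurd (wr_loc w' false v' hw') hne⟩
  · simp [opOf] at h
  · right
    have hl : l = false := by simpa [opOf] using h.symm
    subst hl
    exact ⟨(false, 0), by decide, by decide,
      fun w' v' hw' _ hne => absurd (wr_loc w' false v' hw') hne⟩
  · left
    have hl : l = true := by simpa [opOf] using h.symm
    subst hl
    refine ⟨?_, by decide⟩
    rintro ⟨w, v, hw, hv⟩
    obtain rfl := wr_loc w true v hw
    exact absurd hv (by decide)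
  · right
    have hl : l = true := by simpa [opOf] using h.symm
    subst hl
    exact ⟨(true, 0), by decide, by decide,
      fun w' v' hw' _ hne => absurd (wr_loc w' true v' hw') hne⟩

theorem no_arb :
    ¬ (∃ (vis : Ev13 → Ev13 → Prop) (ser : Bool → Ev13 → Ev13 → Prop),
      (∀ a b, vis13 a b → vis a b) ∧ STO13 ser ∧
      (∀ a b, vis a b → ser b.1 a b) ∧ Valid13 vis ser ∧ SerCons13 vis ser ∧
      ser true = ser false) := by
  rintro ⟨vis, ser, hmono, ⟨hirr, htrans, htot⟩, hvs, hvalid, hsc, harb⟩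
  -- the single order
  set s := ser true with hs
  have hsf : ser false = s := harb.symm
  -- vis ↔ s for every pair (via SerCons and arbitration)
  have hvis_s : ∀ x o : Ev13, vis x o ↔ s x o := by
    intro x o
    rcases o with ⟨b, k⟩
    cases b
    · rw [← hsc ⟨false, k⟩ x]
      exact iff_of_eq (congrFun (congrFun hsf x) ⟨false, k⟩)
    · rw [← hsc ⟨true, k⟩ x]
  -- read (true,2) of y returns 0: no visible write to y
  have h1 : ¬ vis (false, (0 : Fin 4)) (true, (2 : Fin 4)) := by
    intro hv
    rcases hvalid (true, (2 : Fin 4)) false (by decide) with ⟨hne, _⟩ | ⟨w, hw, _⟩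
    · exact hne ⟨(false, 0), 2, by decide, hv⟩
    · exact no_wr0 w false (by exact hw)
  -- read (false,2) of x returns 0: no visible write to x
  have h2 : ¬ vis (true, (0 : Fin 4)) (false, (2 : Fin 4)) := by
    intro hv
    rcases hvalid (false, (2 : Fin 4)) true (by decide) with ⟨hne, _⟩ | ⟨w, hw, _⟩
    · exact hne ⟨(true, 0), 1, by decide, hv⟩
    · exact no_wr0 w true (by exact hw)
  -- build the cycle in s
  have st0t2 : s (true, 0) (true, 2) := by
    rw [← hvis_s]; exact hmono _ _ (Or.inl ⟨rfl, by decide⟩)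
  have sf0f2 : s (false, 0) (false, 2) := by
    rw [← hvis_s]; exact hmono _ _ (Or.inl ⟨rfl, by decide⟩)
  have st2f0 : s (true, 2) (false, 0) := by
    have := h1; rw [hvis_s] at this
    rcases htot true (true, (2 : Fin 4)) (false, (0 : Fin 4)) (by decide) with h | h
    · exact h
    · exact absurd h this
  have sf2t0 : s (false, 2) (true, 0) := by
    have := h2; rw [hvis_s] at this
    rcases htot true (false, (2 : Fin 4)) (true, (0 : Fin 4)) (by decide) with h | h
    · exact h
    · exact absurd h this
  exact hirr true (true, 0)
    (htrans true _ _ _ st0t2 (htrans true _ _ _ st2f0 (htrans true _ _ _ sf0f2 sf2t0)))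

/-- The history above satisfies serial consistency (there is a
valid serially consistent execution), but no valid execution for it satisfies
both serial consistency and arbitration (ser_i = ser_j). -/
theorem stmt_13 :
    (∃ (vis : Ev13 → Ev13 → Prop) (ser : Bool → Ev13 → Ev13 → Prop),
      (∀ a b, vis13 a b → vis a b) ∧ STO13 ser ∧
      (∀ a b, vis a b → ser b.1 a b) ∧ Valid13 vis ser ∧ SerCons13 vis ser) ∧
    ¬ (∃ (vis : Ev13 → Ev13 → Prop) (ser : Bool → Ev13 → Ev13 → Prop),
      (∀ a b, vis13 a b → vis a b) ∧ STO13 ser ∧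
      (∀ a b, vis a b → ser b.1 a b) ∧ Valid13 vis ser ∧ SerCons13 vis ser ∧
      ser true = ser false) := by
  refine ⟨⟨vis13, serW, fun a b h => h, sto_w, fun a b h => (serCons_w b a).mpr h,
    valid_w, serCons_w⟩, no_arb⟩
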